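/- Let g₀ (supported on exactly J points) and g be probability measures on a bounded set Θ ⊆ ℝ^d with ‖θ−θ₀‖ ≤ M for all θ ∈ Θ. Define Δ_g := max_{1≤k≤2J} ‖m_{k,g} − m_{k,g₀}‖₂ where ‖·‖₂ is the tensor spectral norm and m_{k,g} := ∫ (θ−θ₀)^{⊗k} dg(θ). Assuming Banach's theorem that the spectral norm of a symmetric tensor equals sup_{c ∈ S^{d−1}} |⟨T, c^{⊗k}⟩|, one has for every k > 2J: ‖m_{k,g} − m_{k,g₀}‖₂ ≤ k (M+1)^{2Jk} Δ_g. -/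

import Mathlib

open MeasureTheory Polynomial


lemma coeff_abs_le_mul {p q p' q' : Polynomial ℝ}
    (hp : ∀ j, |p.coeff j| ≤ p'.coeff j) (hq : ∀ j, |q.coeff j| ≤ q'.coeff j) :
    ∀ j, |(p * q).coeff j| ≤ (p' * q').coeff j := by
  intro j
  rw [Polynomial.coeff_mul, Polynomial.coeff_mul]
  calc |∑ x ∈ Finset.HasAntidiagonal.antidiagonal j, p.coeff x.1 * q.coeff x.2|
      ≤ ∑ x ∈ Finset.HasAntidiagonal.antidiagonal j, |p.coeff x.1 * q.coeff x.2| :=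
        Finset.abs_sum_le_sum_abs _ _
    _ ≤ ∑ x ∈ Finset.HasAntidiagonal.antidiagonal j, p'.coeff x.1 * q'.coeff x.2 := by
        refine Finset.sum_le_sum fun x _ => ?_
        rw [abs_mul]
        exact mul_le_mul (hp _) (hq _) (abs_nonneg _) ((abs_nonneg _).trans (hp _))

lemma sq_coeff_dom (b : ℝ) : ∀ j, |((X - C b)^2).coeff j| ≤ ((X + C |b|)^2).coeff j := by
  have h1 : (X - C b)^2 = Polynomial.C (b^2) + Polynomial.C (-(2*b)) * X + X^2 := by
    simp only [map_neg, map_mul, map_pow, map_ofNat]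
    ring
  have h2 : (X + C |b|)^2 = Polynomial.C (|b|^2) + Polynomial.C (2*|b|) * X + X^2 := by
    simp only [map_mul, map_pow, map_ofNat]
    ring
  intro j
  rw [h1, h2]
  simp only [Polynomial.coeff_add, Polynomial.coeff_C_mul, Polynomial.coeff_C,
    Polynomial.coeff_X_pow, Polynomial.coeff_X]
  rcases j with _ | _ | _ | j <;> simp [abs_le, sq_abs, abs_mul, abs_nonneg]



lemma prod_coeff_dom {α : Type*} [DecidableEq α] (S : Finset α) (a : α → ℝ) :
    ∀ j, |(∏ s ∈ S, (X - C (a s))^2).coeff j| ≤ (∏ s ∈ S, (X + C |a s|)^2).coeff j := by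
  induction S using Finset.induction_on with
  | empty =>
      intro j
      simp only [Finset.prod_empty, Polynomial.coeff_one]
      split <;> simp
  | insert _ _ hs ih =>
      rw [Finset.prod_insert hs, Finset.prod_insert hs]
      exact coeff_abs_le_mul (sq_coeff_dom _) ih

lemma prod_l1_bound {α : Type*} [DecidableEq α] (S : Finset α) (a : α → ℝ) (M : ℝ)
    (hM : ∀ s ∈ S, |a s| ≤ M) :
    ∑ j ∈ Finset.range (2 * S.card + 1), |(∏ s ∈ S, (X - C (a s))^2).coeff j|
      ≤ (M + 1) ^ (2 * S.card) := by
  have hMnn : ∀ s ∈ S, (0:ℝ) ≤ M := fun s hs => (abs_nonneg _).trans (hM s hs)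
  have hQdeg : (∏ s ∈ S, (X + C |a s|)^2).natDegree < 2 * S.card + 1 := by
    have := Polynomial.natDegree_prod_le S (fun s => (X + C |a s|)^2)
    have h2 : ∀ s ∈ S, ((X + C |a s|)^2).natDegree ≤ 2 := by
      intro s _
      calc ((X + C |a s|)^2).natDegree ≤ 2 * (X + C |a s|).natDegree := by
            simpa using Polynomial.natDegree_pow_le (p := X + C |a s|) (n := 2)
        _ ≤ 2 := by simp [Polynomial.natDegree_X_add_C]
    calc (∏ s ∈ S, (X + C |a s|)^2).natDegree ≤ ∑ s ∈ S, ((X + C |a s|)^2).natDegree := this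
      _ ≤ ∑ s ∈ S, 2 := by
          apply Finset.sum_le_sum
          exact h2
      _ < 2 * S.card + 1 := by rw [Finset.sum_const, smul_eq_mul]; omega
  calc ∑ j ∈ Finset.range (2 * S.card + 1), |(∏ s ∈ S, (X - C (a s))^2).coeff j|
      ≤ ∑ j ∈ Finset.range (2 * S.card + 1), (∏ s ∈ S, (X + C |a s|)^2).coeff j := by
        apply Finset.sum_le_sum
        exact fun j _ => prod_coeff_dom S a j
    _ = (∏ s ∈ S, (X + C |a s|)^2).eval 1 := by
        rw [Polynomial.eval_eq_sum_range' hQdeg]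
        simp
    _ = ∏ s ∈ S, (1 + |a s|)^2 := by
        rw [Polynomial.eval_prod]
        simp
    _ ≤ ∏ s ∈ S, (M + 1)^2 := by
        refine Finset.prod_le_prod (fun s _ => by positivity) fun s hs => ?_
        have := hM s hs
        nlinarith [abs_nonneg (a s)]
    _ = (M + 1) ^ (2 * S.card) := by
        rw [Finset.prod_const, ← pow_mul, mul_comm]


lemma stmt16_phi_meas {d : ℕ} (θ₀ c : Fin d → ℝ) :
    Measurable (fun θ : Fin d → ℝ => ∑ l, (θ l - θ₀ l) * c l) :=
  Finset.measurable_sum _ fun l _ =>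
    ((measurable_pi_apply l).sub measurable_const).mul measurable_const

lemma stmt16_reduction {d : ℕ} {Θ : Set (Fin d → ℝ)} {θ₀ : Fin d → ℝ} {M : ℝ} (hM : 0 ≤ M)
    (hcoord : ∀ θ ∈ Θ, ∀ l, |θ l - θ₀ l| ≤ M)
    (μ : Measure (Fin d → ℝ)) [IsProbabilityMeasure μ] (hμ : μ Θᶜ = 0)
    (c : Fin d → ℝ) (n : ℕ) :
    ∑ i : Fin n → Fin d, (∫ θ, ∏ j, (θ (i j) - θ₀ (i j)) ∂μ) * ∏ j, c (i j)
      = ∫ θ, (∑ l, (θ l - θ₀ l) * c l) ^ n ∂μ := by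
  have hae : ∀ᵐ θ ∂μ, θ ∈ Θ := by
    rw [MeasureTheory.ae_iff]
    exact hμ
  have hintp : ∀ i : Fin n → Fin d,
      Integrable (fun θ : Fin d → ℝ => ∏ j, (θ (i j) - θ₀ (i j))) μ := by
    intro i
    refine (integrable_const (M ^ n)).mono' ?_ ?_
    · exact (Finset.measurable_prod Finset.univ fun j _ =>
        (measurable_pi_apply (i j)).sub measurable_const).aestronglyMeasurable
    · filter_upwards [hae] with θ hθ
      rw [Real.norm_eq_abs, Finset.abs_prod]
      calc ∏ j, |θ (i j) - θ₀ (i j)| ≤ ∏ _j : Fin n, M :=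
            Finset.prod_le_prod (fun j _ => abs_nonneg _) fun j _ => hcoord θ hθ (i j)
        _ = M ^ n := by simp
  have hpt : ∀ θ : Fin d → ℝ, (∑ l, (θ l - θ₀ l) * c l) ^ n
      = ∑ i : Fin n → Fin d, (∏ j, (θ (i j) - θ₀ (i j))) * ∏ j, c (i j) := by
    intro θ
    have h1 : (∑ l, (θ l - θ₀ l) * c l) ^ n = ∏ _j : Fin n, ∑ l, (θ l - θ₀ l) * c l := by
      simp
    rw [h1, Finset.prod_univ_sum (fun _ => Finset.univ) (fun j l => (θ l - θ₀ l) * c l),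
      Fintype.piFinset_univ]
    exact Finset.sum_congr rfl fun i _ => Finset.prod_mul_distrib
  calc ∑ i : Fin n → Fin d, (∫ θ, ∏ j, (θ (i j) - θ₀ (i j)) ∂μ) * ∏ j, c (i j)
      = ∑ i : Fin n → Fin d, ∫ θ, (∏ j, (θ (i j) - θ₀ (i j))) * ∏ j, c (i j) ∂μ := by
        refine Finset.sum_congr rfl fun i _ => ?_
        rw [integral_mul_const]
    _ = ∫ θ, ∑ i : Fin n → Fin d, (∏ j, (θ (i j) - θ₀ (i j))) * ∏ j, c (i j) ∂μ := by
        rw [integral_finset_sum]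
        exact fun i _ => (hintp i).mul_const _
    _ = ∫ θ, (∑ l, (θ l - θ₀ l) * c l) ^ n ∂μ := by
        congr 1
        funext θ
        rw [hpt θ]


lemma stmt16_phi_bound {d : ℕ} {Θ : Set (Fin d → ℝ)} {θ₀ : Fin d → ℝ} {M : ℝ}
    (hΘ : ∀ θ ∈ Θ, Real.sqrt (∑ l, (θ l - θ₀ l) ^ 2) ≤ M)
    {c : Fin d → ℝ} (hc : ∑ l, (c l) ^ 2 = 1) {θ : Fin d → ℝ} (hθ : θ ∈ Θ) :
    |∑ l, (θ l - θ₀ l) * c l| ≤ M := by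
  have h := Finset.sum_mul_sq_le_sq_mul_sq Finset.univ (fun l => θ l - θ₀ l) c
  rw [hc, mul_one] at h
  calc |∑ l, (θ l - θ₀ l) * c l| = Real.sqrt ((∑ l, (θ l - θ₀ l) * c l) ^ 2) :=
        (Real.sqrt_sq_eq_abs _).symm
    _ ≤ Real.sqrt (∑ l, (θ l - θ₀ l) ^ 2) := Real.sqrt_le_sqrt h
    _ ≤ M := hΘ θ hθ

lemma stmt16_coord_bound {d : ℕ} {Θ : Set (Fin d → ℝ)} {θ₀ : Fin d → ℝ} {M : ℝ}
    (hΘ : ∀ θ ∈ Θ, Real.sqrt (∑ l, (θ l - θ₀ l) ^ 2) ≤ M)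
    {θ : Fin d → ℝ} (hθ : θ ∈ Θ) (l : Fin d) : |θ l - θ₀ l| ≤ M := by
  calc |θ l - θ₀ l| = Real.sqrt ((θ l - θ₀ l) ^ 2) := (Real.sqrt_sq_eq_abs _).symm
    _ ≤ Real.sqrt (∑ l', (θ l' - θ₀ l') ^ 2) := by
        apply Real.sqrt_le_sqrt
        exact Finset.single_le_sum (f := fun l' => (θ l' - θ₀ l') ^ 2)
          (fun l' _ => sq_nonneg _) (Finset.mem_univ l)
    _ ≤ M := hΘ θ hθ

lemma stmt16_int_pow {d : ℕ} {Θ : Set (Fin d → ℝ)} {θ₀ : Fin d → ℝ} {M : ℝ}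
    (hΘ : ∀ θ ∈ Θ, Real.sqrt (∑ l, (θ l - θ₀ l) ^ 2) ≤ M)
    {c : Fin d → ℝ} (hc : ∑ l, (c l) ^ 2 = 1)
    (μ : Measure (Fin d → ℝ)) [IsProbabilityMeasure μ] (hμ : μ Θᶜ = 0) (m : ℕ) :
    Integrable (fun θ : Fin d → ℝ => (∑ l, (θ l - θ₀ l) * c l) ^ m) μ := by
  have hae : ∀ᵐ θ ∂μ, θ ∈ Θ := by
    rw [MeasureTheory.ae_iff]; exact hμ
  refine (integrable_const (M ^ m)).mono' ?_ ?_
  · exact ((Finset.measurable_sum _ fun l _ =>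
      ((measurable_pi_apply l).sub measurable_const).mul measurable_const).pow_const
      m).aestronglyMeasurable
  · filter_upwards [hae] with θ hθ
    rw [Real.norm_eq_abs, abs_pow]
    exact pow_le_pow_left₀ (abs_nonneg _) (stmt16_phi_bound hΘ hc hθ) m

lemma stmt16_abs_int_pow {d : ℕ} {Θ : Set (Fin d → ℝ)} {θ₀ : Fin d → ℝ} {M : ℝ}
    (hΘ : ∀ θ ∈ Θ, Real.sqrt (∑ l, (θ l - θ₀ l) ^ 2) ≤ M)
    {c : Fin d → ℝ} (hc : ∑ l, (c l) ^ 2 = 1)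
    (μ : Measure (Fin d → ℝ)) [IsProbabilityMeasure μ] (hμ : μ Θᶜ = 0) (m : ℕ) :
    |∫ θ, (∑ l, (θ l - θ₀ l) * c l) ^ m ∂μ| ≤ M ^ m := by
  have hae : ∀ᵐ θ ∂μ, θ ∈ Θ := by
    rw [MeasureTheory.ae_iff]; exact hμ
  have := MeasureTheory.norm_integral_le_of_norm_le_const (μ := μ)
    (f := fun θ : Fin d → ℝ => (∑ l, (θ l - θ₀ l) * c l) ^ m) (C := M ^ m) ?_
  · simpa using this
  · filter_upwards [hae] with θ hθ
    rw [Real.norm_eq_abs, abs_pow]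
    exact pow_le_pow_left₀ (abs_nonneg _) (stmt16_phi_bound hΘ hc hθ) m



lemma stmt16_univariate {α : Type*} [MeasurableSpace α] {Θ : Set α} {J : ℕ} (hJ : 1 ≤ J)
    {S : Finset α} (hScard : S.card = J) (hSΘ : ↑S ⊆ Θ)
    (g g₀ : Measure α) [IsProbabilityMeasure g] [IsProbabilityMeasure g₀]
    (hg : g Θᶜ = 0) (hg₀ : g₀ (↑S : Set α)ᶜ = 0)
    (φ : α → ℝ) (hφmeas : Measurable φ) {M : ℝ} (hM : 0 ≤ M) (hφb : ∀ θ ∈ Θ, |φ θ| ≤ M)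
    {Δ : ℝ} (hΔ0 : 0 ≤ Δ)
    (hsmall : ∀ m, 1 ≤ m → m ≤ 2 * J →
      |(∫ θ, φ θ ^ m ∂g) - ∫ θ, φ θ ^ m ∂g₀| ≤ Δ) :
    ∀ n : ℕ, 1 ≤ n → |(∫ θ, φ θ ^ n ∂g) - ∫ θ, φ θ ^ n ∂g₀|
      ≤ (n : ℝ) * ((M + 1) ^ (2 * J)) ^ n * Δ := by
  classical
  have hg₀Θ : g₀ Θᶜ = 0 := measure_mono_null (Set.compl_subset_compl.mpr hSΘ) hg₀
  have hgae : ∀ᵐ θ ∂g, θ ∈ Θ := by rw [MeasureTheory.ae_iff]; exact hg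
  have hg₀ae : ∀ᵐ θ ∂g₀, θ ∈ (↑S : Set α) := by rw [MeasureTheory.ae_iff]; exact hg₀
  have hg₀aeΘ : ∀ᵐ θ ∂g₀, θ ∈ Θ := by rw [MeasureTheory.ae_iff]; exact hg₀Θ
  -- integrability of powers
  have hip : ∀ (μ : Measure α) (_ : IsProbabilityMeasure μ), (∀ᵐ θ ∂μ, θ ∈ Θ) →
      ∀ m : ℕ, Integrable (fun θ => φ θ ^ m) μ := by
    intro μ hprob hae m
    refine (integrable_const (M ^ m)).mono' ((hφmeas.pow_const m).aestronglyMeasurable) ?_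
    filter_upwards [hae] with θ hθ
    rw [Real.norm_eq_abs, abs_pow]
    exact pow_le_pow_left₀ (abs_nonneg _) (hφb θ hθ) m
  have hipg := hip g inferInstance hgae
  have hipg₀ := hip g₀ inferInstance hg₀aeΘ
  -- B
  set B : ℝ := (M + 1) ^ (2 * J) with hBdef
  have hB1 : (1:ℝ) ≤ B := one_le_pow₀ (by linarith)
  have hB0 : (0:ℝ) ≤ B := by linarith
  -- the polynomial
  set P : Polynomial ℝ := ∏ s ∈ S, (X - C (φ s))^2 with hPdef
  have hPdeg : P.natDegree = 2 * J := by
    rw [hPdef, Polynomial.natDegree_prod _ _ (fun s _ => pow_ne_zero 2 (Polynomial.X_sub_C_ne_zero _))]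
    simp only [Polynomial.natDegree_pow, Polynomial.natDegree_X_sub_C, mul_one]
    rw [Finset.sum_const, hScard, smul_eq_mul, mul_comm]
  have hPmonic : P.Monic :=
    Polynomial.monic_prod_of_monic _ _ fun s _ => (Polynomial.monic_X_sub_C _).pow 2
  have hPlead : P.coeff (2 * J) = 1 := by
    have := hPmonic.coeff_natDegree
    rwa [hPdeg] at this
  have hPexp : ∀ x : ℝ, P.eval x = (∑ j ∈ Finset.range (2 * J), P.coeff j * x ^ j) + x ^ (2 * J) := by
    intro x
    rw [Polynomial.eval_eq_sum_range' (n := 2 * J + 1) (by omega) x, Finset.sum_range_succ,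
      hPlead, one_mul]
  have hPzero : ∀ θ ∈ (↑S : Set α), P.eval (φ θ) = 0 := by
    intro θ hθ
    rw [hPdef, Polynomial.eval_prod]
    exact Finset.prod_eq_zero (Finset.mem_coe.mp hθ) (by simp)
  have hPnneg : ∀ x : ℝ, 0 ≤ P.eval x := by
    intro x
    rw [hPdef, Polynomial.eval_prod]
    exact Finset.prod_nonneg fun s _ => by simp [sq_nonneg]
  have hPl1 : ∑ j ∈ Finset.range (2 * J + 1), |P.coeff j| ≤ B := by
    have := prod_l1_bound S (fun s => φ s) M (fun s hs => hφb s (hSΘ hs))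
    rwa [hScard] at this
  -- integrability of P ∘ φ
  have hPφeq : (fun θ => P.eval (φ θ))
      = fun θ => ∑ j ∈ Finset.range (2 * J + 1), P.coeff j * φ θ ^ j := by
    funext θ
    exact Polynomial.eval_eq_sum_range' (by omega) (φ θ)
  have hipP : ∀ (μ : Measure α) (_ : IsProbabilityMeasure μ), (∀ᵐ θ ∂μ, θ ∈ Θ) →
      Integrable (fun θ => P.eval (φ θ)) μ := by
    intro μ hprob hae
    rw [hPφeq]
    exact integrable_finset_sum _ fun j _ => (hip μ hprob hae j).const_mul _
  -- expansion of ∫ P∘φ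
  have hPint : ∀ (μ : Measure α) (_ : IsProbabilityMeasure μ), (∀ᵐ θ ∂μ, θ ∈ Θ) →
      ∫ θ, P.eval (φ θ) ∂μ = ∑ j ∈ Finset.range (2 * J + 1), P.coeff j * ∫ θ, φ θ ^ j ∂μ := by
    intro μ hprob hae
    rw [hPφeq, integral_finset_sum _ fun j _ => (hip μ hprob hae j).const_mul _]
    exact Finset.sum_congr rfl fun j _ => MeasureTheory.integral_const_mul _ _
  have hPg₀ : ∫ θ, P.eval (φ θ) ∂g₀ = 0 := by
    apply MeasureTheory.integral_eq_zero_of_ae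
    filter_upwards [hg₀ae] with θ hθ
    exact hPzero θ hθ
  -- small-index moment differences
  have hDsmall : ∀ j ∈ Finset.range (2 * J + 1),
      |(∫ θ, φ θ ^ j ∂g) - ∫ θ, φ θ ^ j ∂g₀| ≤ Δ := by
    intro j hj
    rcases Nat.eq_zero_or_pos j with h0 | h1
    · subst h0
      simpa using hΔ0
    · exact hsmall j h1 (by have := Finset.mem_range.mp hj; omega)
  have hPgle : ∫ θ, P.eval (φ θ) ∂g ≤ B * Δ := by
    have heq : ∫ θ, P.eval (φ θ) ∂g
        = ∑ j ∈ Finset.range (2 * J + 1),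
            P.coeff j * ((∫ θ, φ θ ^ j ∂g) - ∫ θ, φ θ ^ j ∂g₀) := by
      rw [← sub_zero (∫ θ, P.eval (φ θ) ∂g)]
      nth_rewrite 1 [← hPg₀]
      rw [hPint g inferInstance hgae, hPint g₀ inferInstance hg₀aeΘ,
        ← Finset.sum_sub_distrib]
      exact Finset.sum_congr rfl fun j _ => (mul_sub _ _ _).symm
    rw [heq]
    calc ∑ j ∈ Finset.range (2 * J + 1),
            P.coeff j * ((∫ θ, φ θ ^ j ∂g) - ∫ θ, φ θ ^ j ∂g₀)
        ≤ |∑ j ∈ Finset.range (2 * J + 1),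
            P.coeff j * ((∫ θ, φ θ ^ j ∂g) - ∫ θ, φ θ ^ j ∂g₀)| := le_abs_self _
      _ ≤ ∑ j ∈ Finset.range (2 * J + 1),
            |P.coeff j * ((∫ θ, φ θ ^ j ∂g) - ∫ θ, φ θ ^ j ∂g₀)| :=
          Finset.abs_sum_le_sum_abs _ _
      _ ≤ ∑ j ∈ Finset.range (2 * J + 1), |P.coeff j| * Δ := by
          apply Finset.sum_le_sum
          intro j hj
          rw [abs_mul]
          exact mul_le_mul_of_nonneg_left (hDsmall j hj) (abs_nonneg _)
      _ = (∑ j ∈ Finset.range (2 * J + 1), |P.coeff j|) * Δ := (Finset.sum_mul _ _ _).symm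
      _ ≤ B * Δ := mul_le_mul_of_nonneg_right hPl1 hΔ0
  have hPl1' : ∑ j ∈ Finset.range (2 * J), |P.coeff j| ≤ B :=
    le_trans (Finset.sum_le_sum_of_subset_of_nonneg
      (Finset.range_subset_range.mpr (by omega)) (fun _ _ _ => abs_nonneg _)) hPl1
  have hMB : M ≤ B := le_trans (by linarith) (le_self_pow₀ (by linarith : (1:ℝ) ≤ M + 1) (by omega))
  -- main induction
  intro n
  induction n using Nat.strong_induction_on with
  | _ n ih =>
  intro hn1
  by_cases hn2 : n ≤ 2 * J
  · have h := hsmall n hn1 hn2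
    have hBn : (1:ℝ) ≤ B ^ n := one_le_pow₀ hB1
    have hn1' : (1:ℝ) ≤ (n:ℝ) := by exact_mod_cast hn1
    have h1 : (1:ℝ) ≤ (n:ℝ) * B ^ n := by nlinarith
    calc |(∫ θ, φ θ ^ n ∂g) - ∫ θ, φ θ ^ n ∂g₀| ≤ Δ := h
      _ = 1 * Δ := (one_mul Δ).symm
      _ ≤ (n:ℝ) * B ^ n * Δ := mul_le_mul_of_nonneg_right h1 hΔ0
  · push_neg at hn2
    have hfeq : (fun θ => φ θ ^ (n - 2*J) * P.eval (φ θ))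
        = fun θ => φ θ ^ n + ∑ j ∈ Finset.range (2*J), P.coeff j * φ θ ^ (n - 2*J + j) := by
      funext θ
      rw [hPexp (φ θ), mul_add, Finset.mul_sum, ← pow_add]
      have h2 : n - 2*J + 2*J = n := by omega
      rw [h2, add_comm]
      congr 1
      refine Finset.sum_congr rfl fun j _ => ?_
      rw [pow_add]
      ring
    have hintf : ∀ (μ : Measure α) (_ : IsProbabilityMeasure μ), (∀ᵐ θ ∂μ, θ ∈ Θ) →
        Integrable (fun θ => φ θ ^ (n - 2*J) * P.eval (φ θ)) μ := by
      intro μ hprob hae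
      rw [hfeq]
      exact (hip μ hprob hae n).add
        (integrable_finset_sum _ fun j _ => (hip μ hprob hae _).const_mul _)
    have hsplit : ∀ (μ : Measure α) (_ : IsProbabilityMeasure μ), (∀ᵐ θ ∂μ, θ ∈ Θ) →
        ∫ θ, φ θ ^ n ∂μ = (∫ θ, φ θ ^ (n - 2*J) * P.eval (φ θ) ∂μ)
          - ∑ j ∈ Finset.range (2*J), P.coeff j * ∫ θ, φ θ ^ (n - 2*J + j) ∂μ := by
      intro μ hprob hae
      have h1 : ∫ θ, φ θ ^ (n - 2*J) * P.eval (φ θ) ∂μ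
          = (∫ θ, φ θ ^ n ∂μ)
            + ∑ j ∈ Finset.range (2*J), P.coeff j * ∫ θ, φ θ ^ (n - 2*J + j) ∂μ := by
        rw [hfeq, integral_add (hip μ hprob hae n)
            (integrable_finset_sum _ fun j _ => (hip μ hprob hae _).const_mul _),
          integral_finset_sum _ fun j _ => (hip μ hprob hae _).const_mul _]
        congr 1
        exact Finset.sum_congr rfl fun j _ => integral_const_mul _ _
      linarith
    have hI₀ : ∫ θ, φ θ ^ (n - 2*J) * P.eval (φ θ) ∂g₀ = 0 := by
      apply integral_eq_zero_of_ae
      filter_upwards [hg₀ae] with θ hθ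
      simp [hPzero θ hθ]
    have hIg : |∫ θ, φ θ ^ (n - 2*J) * P.eval (φ θ) ∂g| ≤ M ^ (n - 2*J) * (B * Δ) := by
      have hb1 : |∫ θ, φ θ ^ (n - 2*J) * P.eval (φ θ) ∂g|
          ≤ ∫ θ, |φ θ ^ (n - 2*J) * P.eval (φ θ)| ∂g := by
        have := MeasureTheory.norm_integral_le_integral_norm
          (μ := g) (f := fun θ => φ θ ^ (n - 2*J) * P.eval (φ θ))
        simp only [Real.norm_eq_abs] at this
        exact this
      have hb2 : ∫ θ, |φ θ ^ (n - 2*J) * P.eval (φ θ)| ∂g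
          ≤ ∫ θ, M ^ (n - 2*J) * P.eval (φ θ) ∂g := by
        apply integral_mono_ae ((hintf g inferInstance hgae).abs)
          ((hipP g inferInstance hgae).const_mul _)
        filter_upwards [hgae] with θ hθ
        rw [abs_mul, abs_pow, abs_of_nonneg (hPnneg _)]
        exact mul_le_mul_of_nonneg_right
          (pow_le_pow_left₀ (abs_nonneg _) (hφb θ hθ) _) (hPnneg _)
      have hb3 : ∫ θ, M ^ (n - 2*J) * P.eval (φ θ) ∂g
          = M ^ (n - 2*J) * ∫ θ, P.eval (φ θ) ∂g := integral_const_mul _ _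
      have hb4 : M ^ (n - 2*J) * ∫ θ, P.eval (φ θ) ∂g ≤ M ^ (n - 2*J) * (B * Δ) :=
        mul_le_mul_of_nonneg_left hPgle (pow_nonneg hM _)
      linarith
    have hDn : (∫ θ, φ θ ^ n ∂g) - ∫ θ, φ θ ^ n ∂g₀
        = (∫ θ, φ θ ^ (n - 2*J) * P.eval (φ θ) ∂g)
          - ∑ j ∈ Finset.range (2*J), P.coeff j *
              ((∫ θ, φ θ ^ (n - 2*J + j) ∂g) - ∫ θ, φ θ ^ (n - 2*J + j) ∂g₀) := by
      rw [hsplit g inferInstance hgae, hsplit g₀ inferInstance hg₀aeΘ, hI₀]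
      have hsum : ∑ j ∈ Finset.range (2*J), P.coeff j *
              ((∫ θ, φ θ ^ (n - 2*J + j) ∂g) - ∫ θ, φ θ ^ (n - 2*J + j) ∂g₀)
          = (∑ j ∈ Finset.range (2*J), P.coeff j * ∫ θ, φ θ ^ (n - 2*J + j) ∂g)
            - ∑ j ∈ Finset.range (2*J), P.coeff j * ∫ θ, φ θ ^ (n - 2*J + j) ∂g₀ := by
        rw [← Finset.sum_sub_distrib]
        exact Finset.sum_congr rfl fun j _ => mul_sub _ _ _
      rw [hsum]
      ring
    rw [hDn]
    have hcast : ((n - 1 : ℕ) : ℝ) = (n : ℝ) - 1 := by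
      push_cast [Nat.cast_sub hn1]
      ring
    have htail : ∀ j ∈ Finset.range (2*J),
        |P.coeff j * ((∫ θ, φ θ ^ (n - 2*J + j) ∂g) - ∫ θ, φ θ ^ (n - 2*J + j) ∂g₀)|
          ≤ |P.coeff j| * (((n:ℝ) - 1) * B ^ (n-1) * Δ) := by
      intro j hj
      rw [abs_mul]
      apply mul_le_mul_of_nonneg_left _ (abs_nonneg _)
      have hj' : j < 2*J := Finset.mem_range.mp hj
      have h1 : 1 ≤ n - 2*J + j := by omega
      have h2 : n - 2*J + j < n := by omega
      refine (ih _ h2 h1).trans ?_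
      apply mul_le_mul_of_nonneg_right _ hΔ0
      have hc1 : ((n - 2*J + j : ℕ) : ℝ) ≤ (n:ℝ) - 1 := by
        rw [← hcast]
        exact_mod_cast (by omega : n - 2*J + j ≤ n - 1)
      have hc2 : B ^ (n - 2*J + j) ≤ B ^ (n-1) := pow_le_pow_right₀ hB1 (by omega)
      have hc3 : (0:ℝ) ≤ ((n - 2*J + j : ℕ) : ℝ) := by positivity
      exact mul_le_mul hc1 hc2 (by positivity) (by linarith [hcast ▸ hc1, hc3])
    calc |(∫ θ, φ θ ^ (n - 2*J) * P.eval (φ θ) ∂g)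
          - ∑ j ∈ Finset.range (2*J), P.coeff j *
              ((∫ θ, φ θ ^ (n - 2*J + j) ∂g) - ∫ θ, φ θ ^ (n - 2*J + j) ∂g₀)|
        ≤ |∫ θ, φ θ ^ (n - 2*J) * P.eval (φ θ) ∂g|
          + |∑ j ∈ Finset.range (2*J), P.coeff j *
              ((∫ θ, φ θ ^ (n - 2*J + j) ∂g) - ∫ θ, φ θ ^ (n - 2*J + j) ∂g₀)| := abs_sub _ _
      _ ≤ M ^ (n - 2*J) * (B * Δ)
          + ∑ j ∈ Finset.range (2*J), |P.coeff j *
              ((∫ θ, φ θ ^ (n - 2*J + j) ∂g) - ∫ θ, φ θ ^ (n - 2*J + j) ∂g₀)| :=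
          add_le_add hIg (Finset.abs_sum_le_sum_abs _ _)
      _ ≤ M ^ (n - 2*J) * (B * Δ)
          + ∑ j ∈ Finset.range (2*J), |P.coeff j| * (((n:ℝ) - 1) * B ^ (n-1) * Δ) := by
          apply add_le_add le_rfl
          apply Finset.sum_le_sum
          exact htail
      _ = M ^ (n - 2*J) * (B * Δ)
          + (∑ j ∈ Finset.range (2*J), |P.coeff j|) * (((n:ℝ) - 1) * B ^ (n-1) * Δ) := by
          rw [Finset.sum_mul]
      _ ≤ B ^ (n - 2*J) * (B * Δ) + B * (((n:ℝ) - 1) * B ^ (n-1) * Δ) := by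
          have e1 : M ^ (n - 2*J) ≤ B ^ (n - 2*J) := pow_le_pow_left₀ hM hMB _
          have e2 : (0:ℝ) ≤ B * Δ := mul_nonneg hB0 hΔ0
          have e3 : (0:ℝ) ≤ ((n:ℝ) - 1) * B ^ (n-1) * Δ := by
            have : (1:ℝ) ≤ (n:ℝ) := by exact_mod_cast hn1
            have : (0:ℝ) ≤ (n:ℝ) - 1 := by linarith
            positivity
          exact add_le_add (mul_le_mul_of_nonneg_right e1 e2)
            (mul_le_mul_of_nonneg_right hPl1' e3)
      _ ≤ (n:ℝ) * B ^ n * Δ := by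
          have e4 : B ^ (n - 2*J) * B = B ^ (n - 2*J + 1) := (pow_succ B (n - 2*J)).symm
          have e5 : B * B ^ (n-1) = B ^ n := by
            rw [← pow_succ']
            congr 1
            omega
          have e6 : B ^ (n - 2*J + 1) ≤ B ^ n := pow_le_pow_right₀ hB1 (by omega)
          have e7 : (1:ℝ) ≤ (n:ℝ) := by exact_mod_cast hn1
          calc B ^ (n - 2*J) * (B * Δ) + B * (((n:ℝ) - 1) * B ^ (n-1) * Δ)
              = B ^ (n - 2*J + 1) * Δ + ((n:ℝ) - 1) * (B * B ^ (n-1)) * Δ := by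
                rw [← e4]; ring
            _ = B ^ (n - 2*J + 1) * Δ + ((n:ℝ) - 1) * B ^ n * Δ := by rw [e5]
            _ ≤ B ^ n * Δ + ((n:ℝ) - 1) * B ^ n * Δ :=
                add_le_add (mul_le_mul_of_nonneg_right e6 hΔ0) le_rfl
            _ = (n:ℝ) * B ^ n * Δ := by ring


theorem stmt_16 (d : ℕ) (Θ : Set (Fin d → ℝ)) (θ₀ : Fin d → ℝ) (M : ℝ)
    (hΘ : ∀ θ ∈ Θ, Real.sqrt (∑ l, (θ l - θ₀ l) ^ 2) ≤ M)
    (J : ℕ) (hJ : 1 ≤ J)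
    (S : Finset (Fin d → ℝ)) (hScard : S.card = J) (hSΘ : ↑S ⊆ Θ)
    (g g₀ : Measure (Fin d → ℝ)) [IsProbabilityMeasure g] [IsProbabilityMeasure g₀]
    (hg : g Θᶜ = 0) (hg₀ : g₀ (↑S : Set (Fin d → ℝ))ᶜ = 0)
    (hatoms : ∀ θ ∈ S, g₀ {θ} ≠ 0)
    (N : ℕ → ℝ)
    (hN : ∀ k, N k = sSup {y : ℝ | ∃ c : Fin d → ℝ, ∑ l, (c l) ^ 2 = 1 ∧
      y = |∑ i : Fin k → Fin d,
        (((∫ θ, ∏ j, (θ (i j) - θ₀ (i j)) ∂g) - ∫ θ, ∏ j, (θ (i j) - θ₀ (i j)) ∂g₀)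
          * ∏ j, c (i j))|})
    (Δ : ℝ)
    (hΔ : Δ = (Finset.Icc 1 (2 * J)).sup' (Finset.nonempty_Icc.mpr (by omega)) N)
    (k : ℕ) (hk : 2 * J < k) :
    N k ≤ (k : ℝ) * (M + 1) ^ (2 * J * k) * Δ := by
  classical
  obtain ⟨s₀, hs₀⟩ : S.Nonempty := Finset.card_pos.mp (by omega)
  have hM0 : 0 ≤ M := le_trans (Real.sqrt_nonneg _) (hΘ s₀ (hSΘ hs₀))
  have hcoord : ∀ θ ∈ Θ, ∀ l, |θ l - θ₀ l| ≤ M := fun θ hθ l => stmt16_coord_bound hΘ hθ l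
  have hg₀Θ : g₀ Θᶜ = 0 := measure_mono_null (Set.compl_subset_compl.mpr hSΘ) hg₀
  have hexpr : ∀ (n : ℕ) (c : Fin d → ℝ),
      (∑ i : Fin n → Fin d,
        (((∫ θ, ∏ j, (θ (i j) - θ₀ (i j)) ∂g) - ∫ θ, ∏ j, (θ (i j) - θ₀ (i j)) ∂g₀)
          * ∏ j, c (i j)))
      = (∫ θ, (∑ l, (θ l - θ₀ l) * c l) ^ n ∂g)
        - ∫ θ, (∑ l, (θ l - θ₀ l) * c l) ^ n ∂g₀ := by
    intro n c
    rw [← stmt16_reduction hM0 hcoord g hg c n, ← stmt16_reduction hM0 hcoord g₀ hg₀Θ c n,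
      ← Finset.sum_sub_distrib]
    exact Finset.sum_congr rfl fun i _ => sub_mul _ _ _
  have hub : ∀ (n : ℕ) (c : Fin d → ℝ), (∑ l, (c l) ^ 2 = 1) →
      |(∫ θ, (∑ l, (θ l - θ₀ l) * c l) ^ n ∂g)
        - ∫ θ, (∑ l, (θ l - θ₀ l) * c l) ^ n ∂g₀| ≤ 2 * M ^ n := by
    intro n c hc
    have h1 := stmt16_abs_int_pow hΘ hc g hg n
    have h2 := stmt16_abs_int_pow hΘ hc g₀ hg₀Θ n
    calc |(∫ θ, (∑ l, (θ l - θ₀ l) * c l) ^ n ∂g)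
          - ∫ θ, (∑ l, (θ l - θ₀ l) * c l) ^ n ∂g₀|
        ≤ |∫ θ, (∑ l, (θ l - θ₀ l) * c l) ^ n ∂g|
          + |∫ θ, (∑ l, (θ l - θ₀ l) * c l) ^ n ∂g₀| := abs_sub _ _
      _ ≤ 2 * M ^ n := by linarith
  have hBdd : ∀ n : ℕ, BddAbove {y : ℝ | ∃ c : Fin d → ℝ, ∑ l, (c l) ^ 2 = 1 ∧
      y = |∑ i : Fin n → Fin d,
        (((∫ θ, ∏ j, (θ (i j) - θ₀ (i j)) ∂g) - ∫ θ, ∏ j, (θ (i j) - θ₀ (i j)) ∂g₀)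
          * ∏ j, c (i j))|} := by
    intro n
    refine ⟨2 * M ^ n, ?_⟩
    rintro y ⟨c, hc, rfl⟩
    rw [hexpr n c]
    exact hub n c hc
  have hNnonneg : ∀ n, 0 ≤ N n := by
    intro n
    rw [hN n]
    apply Real.sSup_nonneg
    rintro y ⟨c, hc, rfl⟩
    exact abs_nonneg _
  have hΔ0 : 0 ≤ Δ := by
    rw [hΔ]
    exact le_trans (hNnonneg 1) (Finset.le_sup' N (by simp [Finset.mem_Icc]; omega))
  have hsmall : ∀ c : Fin d → ℝ, (∑ l, (c l) ^ 2 = 1) → ∀ m, 1 ≤ m → m ≤ 2 * J →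
      |(∫ θ, (∑ l, (θ l - θ₀ l) * c l) ^ m ∂g)
        - ∫ θ, (∑ l, (θ l - θ₀ l) * c l) ^ m ∂g₀| ≤ Δ := by
    intro c hc m h1 h2
    have hmem : |(∫ θ, (∑ l, (θ l - θ₀ l) * c l) ^ m ∂g)
        - ∫ θ, (∑ l, (θ l - θ₀ l) * c l) ^ m ∂g₀|
        ∈ {y : ℝ | ∃ c : Fin d → ℝ, ∑ l, (c l) ^ 2 = 1 ∧
      y = |∑ i : Fin m → Fin d,
        (((∫ θ, ∏ j, (θ (i j) - θ₀ (i j)) ∂g) - ∫ θ, ∏ j, (θ (i j) - θ₀ (i j)) ∂g₀)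
          * ∏ j, c (i j))|} := ⟨c, hc, by rw [hexpr m c]⟩
    have hle := le_csSup (hBdd m) hmem
    rw [← hN m] at hle
    refine hle.trans ?_
    rw [hΔ]
    exact Finset.le_sup' N (by simp [Finset.mem_Icc]; omega)
  have hkey : ∀ c : Fin d → ℝ, (∑ l, (c l) ^ 2 = 1) →
      |(∫ θ, (∑ l, (θ l - θ₀ l) * c l) ^ k ∂g)
        - ∫ θ, (∑ l, (θ l - θ₀ l) * c l) ^ k ∂g₀|
        ≤ (k : ℝ) * ((M + 1) ^ (2 * J)) ^ k * Δ := by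
    intro c hc
    exact stmt16_univariate hJ hScard hSΘ g g₀ hg hg₀
      (fun θ => ∑ l, (θ l - θ₀ l) * c l) (stmt16_phi_meas θ₀ c) hM0
      (fun θ hθ => stmt16_phi_bound hΘ hc hθ) hΔ0 (hsmall c hc) k (by omega)
  have hRHS0 : 0 ≤ (k : ℝ) * (M + 1) ^ (2 * J * k) * Δ := by
    apply mul_nonneg (mul_nonneg (Nat.cast_nonneg k) (pow_nonneg (by linarith) _)) hΔ0
  rw [hN k]
  apply Real.sSup_le _ hRHS0
  rintro y ⟨c, hc, rfl⟩
  rw [hexpr k c]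
  calc |(∫ θ, (∑ l, (θ l - θ₀ l) * c l) ^ k ∂g)
        - ∫ θ, (∑ l, (θ l - θ₀ l) * c l) ^ k ∂g₀|
      ≤ (k : ℝ) * ((M + 1) ^ (2 * J)) ^ k * Δ := hkey c hc
    _ = (k : ℝ) * (M + 1) ^ (2 * J * k) * Δ := by rw [← pow_mul]
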